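/- Let n ≥ 1, a : Fin n → ℝ and b ∈ ℝ with 0 < a i < b for all i, and let λ ∈ ℝ satisfy 0 ≤ λ < a i for all i. Let f_λ be the diagonal linear map on ℝ^{n+1} multiplying x_i by Real.sqrt ((a i - λ)/(a i)) (i ≥ 1) and x₀ by Real.sqrt ((b - λ)/b), and let g_λ = f_λ⁻¹ be its inverse. Suppose x, y ∈ ℝ^{n+1} satisfy B(x,x) = B(y,y) = -1, x 0 > 0, y 0 > 0, q(x) = ∑_{i=1}^n (x i)^2/a i - (x 0)^2/b = 0 and q_λ(y) = ∑_{i=1}^n (y i)^2/(a i - λ) - (y 0)^2/(b - λ) = 0. Then B(f_λ x, f_λ x) = -1, B(g_λ y, g_λ y) = -1, (f_λ x) 0 > 0, (g_λ y) 0 > 0, and Real.arcosh (-B(x, y)) = Real.arcosh (-B(f_λ x, g_λ y)). (Hyperbolic Ivory Lemma: the hyperbolic distance between x and y equals the hyperbolic distance between the corresponding points f_λ x and f_λ⁻¹ y on the two confocal hyperbolic ellipsoids.) -/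

import Mathlib

/-- The inverse hyperbolic cosine, `arcosh x = log (x + √(x² - 1))`. -/
noncomputable def Real.arcosh' (x : ℝ) : ℝ := Real.log (x + Real.sqrt (x ^ 2 - 1))

/-- The Minkowski bilinear form on `ℝ^{n+1}`: `B(x,y) = -x₀y₀ + ∑_{i=1}^n x_i y_i`. -/
def minkowskiForm (n : ℕ) (x y : Fin (n + 1) → ℝ) : ℝ :=
  -(x 0 * y 0) + ∑ i : Fin n, x i.succ * y i.succ

/-- **Hyperbolic Ivory Lemma**: for `x` on the hyperbolic ellipsoid `E ⊂ ℍⁿ` and `y` on the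
confocal hyperbolic ellipsoid `E_λ`, the hyperbolic distance `arcosh(-B(x,y))` equals the
hyperbolic distance between the corresponding points `f_λ x ∈ E_λ` and `f_λ⁻¹ y ∈ E`. -/
theorem ivory_lemma_hyperbolic (n : ℕ) (hn : 1 ≤ n) (a : Fin n → ℝ) (b : ℝ)
    (ha : ∀ i, 0 < a i) (hab : ∀ i, a i < b)
    (lam : ℝ) (hlam0 : 0 ≤ lam) (hlam : ∀ i, lam < a i)
    (f g : (Fin (n + 1) → ℝ) →ₗ[ℝ] (Fin (n + 1) → ℝ))
    (hf0 : ∀ x : Fin (n + 1) → ℝ, f x 0 = Real.sqrt ((b - lam) / b) * x 0)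
    (hfi : ∀ (x : Fin (n + 1) → ℝ) (i : Fin n),
      f x i.succ = Real.sqrt ((a i - lam) / a i) * x i.succ)
    (hg0 : ∀ y : Fin (n + 1) → ℝ, g y 0 = (Real.sqrt ((b - lam) / b))⁻¹ * y 0)
    (hgi : ∀ (y : Fin (n + 1) → ℝ) (i : Fin n),
      g y i.succ = (Real.sqrt ((a i - lam) / a i))⁻¹ * y i.succ)
    (x y : Fin (n + 1) → ℝ)
    (hBx : minkowskiForm n x x = -1) (hBy : minkowskiForm n y y = -1)
    (hx0 : 0 < x 0) (hy0 : 0 < y 0)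
    (hqx : ∑ i : Fin n, (x i.succ) ^ 2 / a i - (x 0) ^ 2 / b = 0)
    (hqy : ∑ i : Fin n, (y i.succ) ^ 2 / (a i - lam) - (y 0) ^ 2 / (b - lam) = 0) :
    minkowskiForm n (f x) (f x) = -1 ∧ minkowskiForm n (g y) (g y) = -1 ∧
      0 < f x 0 ∧ 0 < g y 0 ∧
      Real.arcosh' (-minkowskiForm n x y) = Real.arcosh' (-minkowskiForm n (f x) (g y)) := by
  have i0 : Fin n := ⟨0, hn⟩
  have hb : 0 < b := (ha i0).trans (hab i0)
  have hlb : lam < b := (hlam i0).trans (hab i0)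
  have key : ∀ c t : ℝ, lam < c → 0 < c →
      (Real.sqrt ((c - lam) / c) * t) * (Real.sqrt ((c - lam) / c) * t)
        = t ^ 2 - lam * (t ^ 2 / c) := by
    intro c t hlc hc
    have hnn : (0:ℝ) ≤ (c - lam) / c := div_nonneg (by linarith) hc.le
    have h : Real.sqrt ((c - lam) / c) ^ 2 = (c - lam) / c := Real.sq_sqrt hnn
    have : (Real.sqrt ((c - lam) / c) * t) * (Real.sqrt ((c - lam) / c) * t)
        = Real.sqrt ((c - lam) / c) ^ 2 * t ^ 2 := by ring
    rw [this, h]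
    field_simp
  have key2 : ∀ c t : ℝ, lam < c → 0 < c →
      ((Real.sqrt ((c - lam) / c))⁻¹ * t) * ((Real.sqrt ((c - lam) / c))⁻¹ * t)
        = t ^ 2 + lam * (t ^ 2 / (c - lam)) := by
    intro c t hlc hc
    have hnn : (0:ℝ) ≤ (c - lam) / c := div_nonneg (by linarith) hc.le
    have h : Real.sqrt ((c - lam) / c) ^ 2 = (c - lam) / c := Real.sq_sqrt hnn
    have hpos : 0 < Real.sqrt ((c - lam) / c) :=
      Real.sqrt_pos.2 (div_pos (by linarith) hc)
    have : ((Real.sqrt ((c - lam) / c))⁻¹ * t) * ((Real.sqrt ((c - lam) / c))⁻¹ * t)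
        = (Real.sqrt ((c - lam) / c) ^ 2)⁻¹ * t ^ 2 := by
      rw [sq, mul_inv]; ring
    rw [this, h]
    have hcl : c - lam ≠ 0 := by linarith
    field_simp
    ring
  have hsbpos : 0 < Real.sqrt ((b - lam) / b) :=
    Real.sqrt_pos.2 (div_pos (by linarith) hb)
  have hsapos : ∀ i, 0 < Real.sqrt ((a i - lam) / a i) := fun i =>
    Real.sqrt_pos.2 (div_pos (by linarith [hlam i]) (ha i))
  simp only [minkowskiForm, ← pow_two] at hBx hBy ⊢
  have h1 : -((f x 0) * (f x 0)) + ∑ i : Fin n, f x i.succ * f x i.succ = -1 := by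
    simp only [hf0, hfi]
    rw [key b (x 0) hlb hb,
      Finset.sum_congr rfl (fun i _ => key (a i) (x i.succ) (hlam i) (ha i)),
      Finset.sum_sub_distrib, ← Finset.mul_sum]
    have hq' : ∑ i : Fin n, (x i.succ) ^ 2 / a i = (x 0) ^ 2 / b := by linarith
    rw [hq']
    linarith
  have h2 : -((g y 0) * (g y 0)) + ∑ i : Fin n, g y i.succ * g y i.succ = -1 := by
    simp only [hg0, hgi]
    rw [key2 b (y 0) hlb hb,
      Finset.sum_congr rfl (fun i _ => key2 (a i) (y i.succ) (hlam i) (ha i)),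
      Finset.sum_add_distrib, ← Finset.mul_sum]
    have hq' : ∑ i : Fin n, (y i.succ) ^ 2 / (a i - lam) = (y 0) ^ 2 / (b - lam) := by
      linarith
    rw [hq']
    linarith
  have h5 : -((f x 0) * (g y 0)) + ∑ i : Fin n, f x i.succ * g y i.succ
      = -(x 0 * y 0) + ∑ i : Fin n, x i.succ * y i.succ := by
    simp only [hf0, hfi, hg0, hgi]
    congr 1
    · have : Real.sqrt ((b - lam) / b) * x 0 * ((Real.sqrt ((b - lam) / b))⁻¹ * y 0)
          = (Real.sqrt ((b - lam) / b) * (Real.sqrt ((b - lam) / b))⁻¹) * (x 0 * y 0) := by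
        ring
      rw [this, mul_inv_cancel₀ hsbpos.ne', one_mul]
    · refine Finset.sum_congr rfl fun i _ => ?_
      have : Real.sqrt ((a i - lam) / a i) * x i.succ
            * ((Real.sqrt ((a i - lam) / a i))⁻¹ * y i.succ)
          = (Real.sqrt ((a i - lam) / a i) * (Real.sqrt ((a i - lam) / a i))⁻¹)
            * (x i.succ * y i.succ) := by ring
      rw [this, mul_inv_cancel₀ (hsapos i).ne', one_mul]
  refine ⟨by simpa [← pow_two] using h1, by simpa [← pow_two] using h2, ?_, ?_, ?_⟩
  · rw [hf0]; positivity
  · rw [hg0]; positivity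
  · rw [h5]
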